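/- Let Λ be a left artinian ring, let n ≥ 1, and for 1 ≤ i ≤ n let fᵢ : Qᵢ → Qᵢ₋₁ be Λ-linear maps, each nonzero and not an isomorphism, where every Qᵢ (0 ≤ i ≤ n) is a finitely generated indecomposable projective Λ-module of length 2 having a submodule that is not projective. Then: (1) the image of f_{i+1} equals the kernel of fᵢ for 1 ≤ i ≤ n − 1; (2) the cokernel T = Q₀ / im f₁ is a simple nonprojective Λ-module and the kernel of fₙ is a simple nonprojective Λ-module; (3) in any minimal projective resolution (Pₘ, dₘ) of T, the term P_{n+2} is nonzero (so the projective dimension of T is at least n + 2). -/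

import Mathlib

/-- rad X = (Jacobson radical of Λ) • X -/
def ModuleRad (Λ : Type) [Ring Λ] (X : Type) [AddCommGroup X] [Module Λ X] :
    Submodule Λ X :=
  Submodule.span Λ {z : X | ∃ r ∈ Ideal.jacobson (⊥ : Ideal Λ), ∃ x : X, z = r • x}

/-- composition length of a module, as the supremum of lengths of strictly
increasing chains of submodules from `⊥` to `⊤`. -/
noncomputable def ModuleLength (Λ : Type) [Ring Λ] (X : Type) [AddCommGroup X]
    [Module Λ X] : ℕ∞ :=
  ⨆ n ∈ {n : ℕ | ∃ c : Fin (n + 1) → Submodule Λ X,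
      StrictMono c ∧ c 0 = ⊥ ∧ c (Fin.last n) = ⊤}, (n : ℕ∞)

/-- a nonzero module that is not an internal direct sum of two nonzero submodules -/
def IndecomposableModule (Λ : Type) [Ring Λ] (X : Type) [AddCommGroup X]
    [Module Λ X] : Prop :=
  (∃ x : X, x ≠ 0) ∧
    ¬ ∃ A B : Submodule Λ X, A ≠ ⊥ ∧ B ≠ ⊥ ∧ IsCompl A B

/-- a minimal projective resolution of `M` -/
structure MinProjRes (Λ : Type) [Ring Λ] (M : Type) [AddCommGroup M] [Module Λ M] where
  P : ℕ → Type
  acg : ∀ n, AddCommGroup (P n)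
  mod : ∀ n, Module Λ (P n)
  proj : ∀ n, Module.Projective Λ (P n)
  fg : ∀ n, Module.Finite Λ (P n)
  d0 : P 0 →ₗ[Λ] M
  d : ∀ n, P (n + 1) →ₗ[Λ] P n
  surj : Function.Surjective d0
  exact0 : LinearMap.range (d 0) = LinearMap.ker d0
  exact : ∀ n, LinearMap.range (d (n + 1)) = LinearMap.ker (d n)
  min0 : LinearMap.ker d0 ≤ ModuleRad Λ (P 0)
  min : ∀ n, LinearMap.ker (d n) ≤ ModuleRad Λ (P (n + 1))

attribute [instance] MinProjRes.acg MinProjRes.mod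

/-- the projective dimension read off from a minimal projective resolution:
`sup {n | Pₙ ≠ 0}` in `ℕ∞` -/
noncomputable def MinProjRes.pd {Λ : Type} [Ring Λ] {M : Type} [AddCommGroup M]
    [Module Λ M] (res : MinProjRes Λ M) : ℕ∞ :=
  ⨆ n ∈ {n : ℕ | ∃ x : res.P n, x ≠ 0}, (n : ℕ∞)

/-- Condition (F) -/
def ConditionF (Λ : Type) [Ring Λ] : Prop :=
  ∀ (P : Type) [AddCommGroup P] [Module Λ P],
    Module.Finite Λ P → Module.Projective Λ P → IndecomposableModule Λ P →
      (Module.Projective Λ ↥(ModuleRad Λ P) ∨ IsSimpleModule Λ ↥(ModuleRad Λ P))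

open LinearMap Submodule Function

section NAK
variable {Λ : Type} [Ring Λ]

lemma jac_mul_mem {r s : Λ} (hr : r ∈ Ideal.jacobson (⊥ : Ideal Λ)) :
    r * s ∈ Ideal.jacobson (⊥ : Ideal Λ) :=
  (Ideal.jacobson (⊥ : Ideal Λ)).mul_mem_right s hr

variable {X Y : Type} [AddCommGroup X] [Module Λ X] [AddCommGroup Y] [Module Λ Y]

lemma smul_mem_rad {r : Λ} (hr : r ∈ Ideal.jacobson (⊥ : Ideal Λ)) (x : X) :
    r • x ∈ ModuleRad Λ X :=
  Submodule.subset_span ⟨r, hr, x, rfl⟩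

lemma rad_map_le (f : X →ₗ[Λ] Y) : (ModuleRad Λ X).map f ≤ ModuleRad Λ Y := by
  rw [ModuleRad, Submodule.map_span]
  refine Submodule.span_le.mpr ?_
  rintro _ ⟨z, ⟨r, hr, x, rfl⟩, rfl⟩
  rw [map_smul]
  exact smul_mem_rad hr (f x)

lemma rad_rep (s : Finset X) (hs : Submodule.span Λ (↑s : Set X) = ⊤) {z : X}
    (hz : z ∈ ModuleRad Λ X) :
    ∃ c : X → Λ, (∀ y, c y ∈ Ideal.jacobson (⊥ : Ideal Λ)) ∧ z = ∑ y ∈ s, c y • y := by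
  let T : Submodule Λ X :=
    { carrier := {z | ∃ c : X → Λ, (∀ y, c y ∈ Ideal.jacobson (⊥ : Ideal Λ)) ∧
        z = ∑ y ∈ s, c y • y}
      add_mem' := by
        rintro a b ⟨c, hc, rfl⟩ ⟨c', hc', rfl⟩
        exact ⟨c + c', fun y => add_mem (hc y) (hc' y), by
          simp [add_smul, Finset.sum_add_distrib]⟩
      zero_mem' := ⟨0, fun y => zero_mem _, by simp⟩
      smul_mem' := by
        rintro a z ⟨c, hc, rfl⟩
        refine ⟨fun y => a * c y, fun y => Ideal.mul_mem_left _ a (hc y), ?_⟩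
        rw [Finset.smul_sum]
        exact Finset.sum_congr rfl fun y _ => smul_smul a (c y) y }
  have hle : ModuleRad Λ X ≤ T := by
    rw [ModuleRad]
    refine Submodule.span_le.mpr ?_
    rintro _ ⟨r, hr, x, rfl⟩
    have hx : x ∈ Submodule.span Λ (↑s : Set X) := hs.symm ▸ Submodule.mem_top
    obtain ⟨c, -, hc⟩ := mem_span_finset.mp hx
    refine ⟨fun y => r * c y, fun y => jac_mul_mem hr, ?_⟩
    rw [← hc, Finset.smul_sum]
    exact Finset.sum_congr rfl fun y _ => smul_smul r (c y) y
  exact hle hz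

lemma nakayama_subsingleton (X : Type) [AddCommGroup X] [Module Λ X] [Module.Finite Λ X]
    (h : (⊤ : Submodule Λ X) ≤ ModuleRad Λ X) : Subsingleton X := by
  classical
  have key : ∀ (k : ℕ) (s : Finset X), s.card ≤ k →
      Submodule.span Λ (↑s : Set X) = ⊤ → Subsingleton X := by
    intro k
    induction k with
    | zero =>
      intro s hcard hspan
      have hs : s = ∅ := Finset.card_eq_zero.mp (Nat.le_zero.mp hcard)
      subst hs
      simp only [Finset.coe_empty, Submodule.span_empty] at hspan
      refine ⟨fun a b => ?_⟩
      have ha : a ∈ (⊥ : Submodule Λ X) := hspan ▸ Submodule.mem_top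
      have hb : b ∈ (⊥ : Submodule Λ X) := hspan ▸ Submodule.mem_top
      rw [Submodule.mem_bot] at ha hb
      rw [ha, hb]
    | succ k ih =>
      intro s hcard hspan
      rcases Finset.eq_empty_or_nonempty s with rfl | ⟨x, hx⟩
      · exact ih ∅ (by simp) hspan
      · have hxr : x ∈ ModuleRad Λ X := h Submodule.mem_top
        obtain ⟨c, hc, hrep⟩ := rad_rep s hspan hxr
        have h1 : (1 - c x) • x = ∑ y ∈ s.erase x, c y • y := by
          rw [sub_smul, one_smul, Finset.sum_erase_eq_sub hx, ← hrep]
        obtain ⟨u, hu⟩ := Ideal.exists_mul_sub_mem_of_sub_one_mem_jacobson (1 - c x)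
          (by simpa using (Ideal.jacobson (⊥ : Ideal Λ)).neg_mem (hc x))
        rw [Ideal.mem_bot, sub_eq_zero] at hu
        have hxmem : x ∈ Submodule.span Λ (↑(s.erase x) : Set X) := by
          have hsum : (∑ y ∈ s.erase x, c y • y) ∈ Submodule.span Λ (↑(s.erase x) : Set X) :=
            Submodule.sum_mem _ fun y hy => Submodule.smul_mem _ _ (Submodule.subset_span hy)
          have h2 : u • ((1 - c x) • x) ∈ Submodule.span Λ (↑(s.erase x) : Set X) := by
            rw [h1]; exact Submodule.smul_mem _ u hsum
          rwa [smul_smul, hu, one_smul] at h2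
        have hspan' : Submodule.span Λ (↑(s.erase x) : Set X) = ⊤ := by
          rw [eq_top_iff, ← hspan]
          refine Submodule.span_le.mpr ?_
          intro y hy
          rcases eq_or_ne y x with rfl | hne
          · exact hxmem
          · exact Submodule.subset_span (Finset.mem_erase.mpr ⟨hne, hy⟩)
        exact ih (s.erase x) (by have := Finset.card_erase_of_mem hx; omega) hspan'
  obtain ⟨s, hs⟩ := Module.finite_def.mp (inferInstance : Module.Finite Λ X)
  exact key s.card s le_rfl hs

lemma nakayama_sup_top (X : Type) [AddCommGroup X] [Module Λ X] [Module.Finite Λ X]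
    (N : Submodule Λ X) (h : N ⊔ ModuleRad Λ X = ⊤) : N = ⊤ := by
  haveI : Module.Finite Λ (X ⧸ N) := Module.Finite.of_surjective N.mkQ (Submodule.mkQ_surjective N)
  haveI : Subsingleton (X ⧸ N) := by
    apply nakayama_subsingleton (Λ := Λ)
    intro z _
    obtain ⟨x, rfl⟩ := Submodule.mkQ_surjective N z
    have hx : x ∈ N ⊔ ModuleRad Λ X := h.symm ▸ Submodule.mem_top
    obtain ⟨a, ha, b, hb, rfl⟩ := Submodule.mem_sup.mp hx
    have : N.mkQ (a + b) = N.mkQ b := by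
      simp [Submodule.mkQ_apply, Submodule.Quotient.mk_add,
        (Submodule.Quotient.mk_eq_zero N).mpr ha]
    rw [this]
    exact rad_map_le N.mkQ ⟨b, hb, rfl⟩
  ext x
  simp only [Submodule.mem_top, iff_true]
  have : N.mkQ x = N.mkQ 0 := Subsingleton.elim _ _
  rw [map_zero] at this
  rwa [← Submodule.Quotient.mk_eq_zero, ← Submodule.mkQ_apply]

end NAK

section LEN
variable {Λ : Type} [Ring Λ] {X Y : Type} [AddCommGroup X] [Module Λ X]
  [AddCommGroup Y] [Module Λ Y]

lemma four_chain_absurd (hlen : ModuleLength Λ X = 2) {A B : Submodule Λ X}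
    (h1 : ⊥ < A) (h2 : A < B) (h3 : B < ⊤) : False := by
  have hmem : 3 ∈ {n : ℕ | ∃ c : Fin (n + 1) → Submodule Λ X,
      StrictMono c ∧ c 0 = ⊥ ∧ c (Fin.last n) = ⊤} := by
    refine ⟨![⊥, A, B, ⊤], ?_, rfl, rfl⟩
    rw [Fin.strictMono_iff_lt_succ]
    intro i
    fin_cases i
    · exact h1
    · exact h2
    · exact h3
  have hle : ((3 : ℕ) : ℕ∞) ≤ ModuleLength Λ X :=
    le_iSup₂ (f := fun (n : ℕ) (_ : n ∈ _) => (n : ℕ∞)) 3 hmem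
  rw [hlen] at hle
  norm_num at hle

lemma exists_chain2 (hlen : ModuleLength Λ X = 2) :
    ∃ A : Submodule Λ X, ⊥ < A ∧ A < ⊤ := by
  have hne : ¬ (ModuleLength Λ X ≤ 1) := by rw [hlen]; norm_num
  have hex : ∃ m ∈ {n : ℕ | ∃ c : Fin (n + 1) → Submodule Λ X,
      StrictMono c ∧ c 0 = ⊥ ∧ c (Fin.last n) = ⊤}, ¬ ((m : ℕ∞) ≤ 1) := by
    by_contra h'
    push_neg at h'
    exact hne (iSup₂_le h')
  obtain ⟨m, ⟨c, hc, hc0, hcl⟩, hm1⟩ := hex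
  have hm : 2 ≤ m := by
    by_contra hcon
    exact hm1 (by exact_mod_cast Nat.lt_succ_iff.mp (by omega : m < 2))
  refine ⟨c ⟨1, by omega⟩, ?_, ?_⟩
  · rw [← hc0]
    exact hc (by rw [Fin.lt_def]; norm_num)
  · rw [← hcl]
    exact hc (by rw [Fin.lt_def]; simp [Fin.last]; omega)

lemma mid_unique (hind : IndecomposableModule Λ X) (hlen : ModuleLength Λ X = 2)
    {A B : Submodule Λ X} (hA : ⊥ < A ∧ A < ⊤) (hB : ⊥ < B ∧ B < ⊤) : A = B := by
  by_contra hne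
  by_cases hab : A ≤ B
  · exact four_chain_absurd hlen hA.1 (lt_of_le_of_ne hab hne) hB.2
  by_cases hba : B ≤ A
  · exact four_chain_absurd hlen hB.1 (lt_of_le_of_ne hba (Ne.symm hne)) hA.2
  have h1 : A ⊓ B < A := lt_of_le_of_ne inf_le_left (fun h => hab (h ▸ inf_le_right : A ≤ B))
  have h2 : A < A ⊔ B := lt_of_le_of_ne le_sup_left (fun h => hba (h ▸ le_sup_right : B ≤ A))
  rcases eq_or_ne (A ⊓ B) ⊥ with hbot | hbot
  · rcases eq_or_ne (A ⊔ B) ⊤ with htop | htop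
    · exact hind.2 ⟨A, B, hA.1.ne', hB.1.ne',
        disjoint_iff.mpr hbot, codisjoint_iff.mpr htop⟩
    · exact four_chain_absurd hlen hA.1 h2 (lt_top_iff_ne_top.mpr htop)
  · exact four_chain_absurd hlen (bot_lt_iff_ne_bot.mpr hbot) h1 hA.2

lemma projective_of_subsingleton (M : Type) [AddCommGroup M] [Module Λ M] [Subsingleton M] :
    Module.Projective Λ M :=
  Module.projective_def'.mpr ⟨0, by ext x; exact Subsingleton.elim _ _⟩

open LinearMap Submodule

lemma semisimple_of_rad_bot [IsArtinianRing Λ] (X : Type) [AddCommGroup X] [Module Λ X] [Module.Finite Λ X]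
    (h0 : ModuleRad Λ X = ⊥) : IsSemisimpleModule Λ X := by
  classical
  set J := Ideal.jacobson (⊥ : Ideal Λ) with hJdef
  obtain ⟨t, ht, hJt⟩ : ∃ t : Finset (Ideal Λ), (∀ m ∈ t, m.IsMaximal) ∧ J = t.inf id := by
    obtain ⟨I0, hI0S, hmin⟩ := IsArtinian.set_has_minimal
      {I : Ideal Λ | ∃ t : Finset (Ideal Λ), (∀ m ∈ t, m.IsMaximal) ∧ I = t.inf id}
      ⟨⊤, ∅, by simp, by simp⟩
    obtain ⟨t, ht, rfl⟩ := hI0S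
    refine ⟨t, ht, le_antisymm (Finset.le_inf fun m hm => sInf_le ⟨bot_le, ht m hm⟩) ?_⟩
    refine le_sInf ?_
    rintro m ⟨-, hmax⟩
    have hmem : (t.inf id) ⊓ m ∈ {I : Ideal Λ |
        ∃ t : Finset (Ideal Λ), (∀ m ∈ t, m.IsMaximal) ∧ I = t.inf id} := by
      refine ⟨insert m t, ?_, ?_⟩
      · intro x hx
        rcases Finset.mem_insert.mp hx with rfl | hx
        · exact hmax
        · exact ht x hx
      · rw [Finset.inf_insert, inf_comm]
        rfl
    have hnl := hmin _ hmem
    have heq : t.inf id ⊓ m = t.inf id := by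
      rcases lt_or_eq_of_le (inf_le_left : t.inf id ⊓ m ≤ t.inf id) with hlt | heq
      · exact absurd hlt hnl
      · exact heq
    rw [← heq]
    exact inf_le_right
  haveI hSSJ : IsSemisimpleModule Λ (Λ ⧸ J) := by
    haveI hsimp : ∀ m : ↥t, IsSimpleModule Λ (Λ ⧸ (m : Ideal Λ)) := fun m =>
      isSimpleModule_iff_isCoatom.mpr (Ideal.isMaximal_def.mp (ht m m.2))
    haveI hss1 : ∀ m : ↥t, IsSemisimpleModule Λ (Λ ⧸ (m : Ideal Λ)) := fun m => inferInstance
    haveI hsspi : IsSemisimpleModule Λ (∀ m : ↥t, Λ ⧸ (m : Ideal Λ)) := by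
      apply isSemisimpleModule_of_isSemisimpleModule_submodule'
        (p := fun m : ↥t => LinearMap.range (LinearMap.single Λ (fun m : ↥t => Λ ⧸ (m : Ideal Λ)) m))
      · intro m
        exact IsSemisimpleModule.congr
          (LinearEquiv.ofInjective (LinearMap.single Λ (fun m : ↥t => Λ ⧸ (m : Ideal Λ)) m) (fun a b h => Pi.single_injective m h)).symm
      · rw [eq_top_iff]
        intro z _
        have hz : z = ∑ m : ↥t, Pi.single m (z m) := by
          rw [Finset.univ_sum_single z]
        rw [hz]
        exact Submodule.sum_mem _ fun m _ => Submodule.mem_iSup_of_mem m ⟨z m, rfl⟩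
    have hker : LinearMap.ker (LinearMap.pi fun m : ↥t => Submodule.mkQ (m : Ideal Λ)) = J := by
      rw [LinearMap.ker_pi, hJt]
      simp only [Submodule.ker_mkQ]
      apply le_antisymm
      · apply Finset.le_inf
        intro m hm
        exact iInf_le (fun m : ↥t => ((m : Ideal Λ) : Ideal Λ)) ⟨m, hm⟩
      · apply le_iInf
        intro m
        exact Finset.inf_le (f := fun I : Ideal Λ => I) m.2
    let φ : (Λ ⧸ J) →ₗ[Λ] (∀ m : ↥t, Λ ⧸ (m : Ideal Λ)) :=
      Submodule.liftQ J (LinearMap.pi fun m : ↥t => Submodule.mkQ (m : Ideal Λ)) hker.ge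
    have hinj : Function.Injective φ := by
      rw [← LinearMap.ker_eq_bot]
      exact Submodule.ker_liftQ_eq_bot _ _ _ hker.le
    exact IsSemisimpleModule.congr (M := ↥(LinearMap.range φ)) (LinearEquiv.ofInjective φ hinj)
  have hcyc : ∀ x : X, IsSemisimpleModule Λ ↥(LinearMap.range (LinearMap.toSpanSingleton Λ X x)) := by
    intro x
    set K := LinearMap.ker (LinearMap.toSpanSingleton Λ X x) with hK
    have hJK : J ≤ K := by
      intro r hr
      have : r • x ∈ ModuleRad Λ X := Submodule.subset_span ⟨r, hr, x, rfl⟩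
      rw [h0, Submodule.mem_bot] at this
      simpa [hK, LinearMap.mem_ker, LinearMap.toSpanSingleton_apply] using this
    haveI : IsSemisimpleModule Λ ((Λ ⧸ J) ⧸ (K.map J.mkQ)) := inferInstance
    haveI : IsSemisimpleModule Λ (Λ ⧸ K) :=
      IsSemisimpleModule.congr (Submodule.quotientQuotientEquivQuotient J K hJK).symm
    exact IsSemisimpleModule.congr (LinearMap.quotKerEquivRange _).symm
  obtain ⟨k, g, hg⟩ := Module.Finite.exists_fin (R := Λ) (M := X)
  apply isSemisimpleModule_of_isSemisimpleModule_submodule'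
    (p := fun i : Fin k => LinearMap.range (LinearMap.toSpanSingleton Λ X (g i)))
  · intro i; exact hcyc (g i)
  · rw [eq_top_iff, ← hg, Submodule.span_range_eq_iSup]
    exact iSup_mono fun i => by rw [LinearMap.span_singleton_eq_range]

lemma mid_spec [IsArtinianRing Λ] (X : Type) [AddCommGroup X] [Module Λ X] [Module.Finite Λ X]
    (hind : IndecomposableModule Λ X) (hlen : ModuleLength Λ X = 2) :
    ∃ S : Submodule Λ X, ⊥ < S ∧ S < ⊤ ∧
      (∀ N : Submodule Λ X, N = ⊥ ∨ N = S ∨ N = ⊤) ∧ S ≤ ModuleRad Λ X := by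
  obtain ⟨S, hS1, hS2⟩ := exists_chain2 hlen
  have htri : ∀ N : Submodule Λ X, N = ⊥ ∨ N = S ∨ N = ⊤ := by
    intro N
    rcases eq_or_ne N ⊥ with h | h1
    · exact Or.inl h
    rcases eq_or_ne N ⊤ with h | h2
    · exact Or.inr (Or.inr h)
    exact Or.inr (Or.inl (mid_unique hind hlen
      ⟨bot_lt_iff_ne_bot.mpr h1, lt_top_iff_ne_top.mpr h2⟩ ⟨hS1, hS2⟩))
  refine ⟨S, hS1, hS2, htri, ?_⟩
  rcases htri (ModuleRad Λ X) with h | h | h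
  · exfalso
    haveI := semisimple_of_rad_bot X h
    obtain ⟨C, hC⟩ := exists_isCompl S
    refine hind.2 ⟨S, C, hS1.ne', ?_, hC⟩
    intro hCbot
    rw [hCbot] at hC
    have hStop : S = ⊤ := by simpa using codisjoint_iff.mp hC.codisjoint
    exact hS2.ne hStop
  · rw [h]
  · exfalso
    haveI := nakayama_subsingleton X h.ge
    have hbt : (⊥ : Submodule Λ X) = ⊤ := by
      ext x
      simp [Subsingleton.elim x 0]
    exact (hS1.trans hS2).ne hbt

lemma cover_compare {M PP QQ : Type} [AddCommGroup M] [Module Λ M]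
    [AddCommGroup PP] [Module Λ PP] [AddCommGroup QQ] [Module Λ QQ]
    [Module.Finite Λ QQ] [Module.Finite Λ PP]
    [Module.Projective Λ PP] [Module.Projective Λ QQ]
    (p : QQ →ₗ[Λ] M) (hps : Function.Surjective p) (hpk : LinearMap.ker p ≤ ModuleRad Λ QQ)
    (q : PP →ₗ[Λ] M) (hqs : Function.Surjective q) (hqk : LinearMap.ker q ≤ ModuleRad Λ PP) :
    Nonempty (↥(LinearMap.ker q) ≃ₗ[Λ] ↥(LinearMap.ker p)) := by
  obtain ⟨g, hg⟩ := Module.projective_lifting_property p q hps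
  have hgq : ∀ x, p (g x) = q x := fun x => by rw [← LinearMap.comp_apply, hg]
  have hgs : Function.Surjective g := by
    have hsup : LinearMap.range g ⊔ ModuleRad Λ QQ = ⊤ := by
      rw [eq_top_iff]
      intro z _
      obtain ⟨x, hx⟩ := hqs (p z)
      have hzk : z - g x ∈ LinearMap.ker p := by
        rw [LinearMap.mem_ker, map_sub, hgq, hx, sub_self]
      have : z = g x + (z - g x) := by abel
      rw [this]
      exact Submodule.add_mem_sup (LinearMap.mem_range_self g x) (hpk hzk)
    rw [← LinearMap.range_eq_top]
    exact nakayama_sup_top QQ _ hsup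
  obtain ⟨s, hs⟩ := Module.projective_lifting_property g LinearMap.id hgs
  have hgsx : ∀ y, g (s y) = y := fun y => by
    rw [← LinearMap.comp_apply, hs, LinearMap.id_apply]
  have hcompl : IsCompl (LinearMap.ker g) (LinearMap.range s) := by
    constructor
    · rw [disjoint_iff]
      ext z
      simp only [Submodule.mem_inf, Submodule.mem_bot, LinearMap.mem_ker, LinearMap.mem_range]
      constructor
      · rintro ⟨hz, y, rfl⟩
        rw [hgsx] at hz
        rw [hz, map_zero]
      · rintro rfl
        exact ⟨map_zero g, 0, map_zero s⟩
    · rw [codisjoint_iff, eq_top_iff]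
      intro x _
      have hx1 : x - s (g x) ∈ LinearMap.ker g := by
        rw [LinearMap.mem_ker, map_sub, hgsx, sub_self]
      have : x = (x - s (g x)) + s (g x) := by abel
      rw [this]
      exact Submodule.add_mem_sup hx1 (LinearMap.mem_range_self s (g x))
  set D := LinearMap.ker g with hD
  let π := Submodule.linearProjOfIsCompl D (LinearMap.range s) hcompl
  have hπ : ∀ d : ↥D, π (d : PP) = d := fun d =>
    Submodule.linearProjOfIsCompl_apply_left hcompl d
  haveI : Module.Finite Λ ↥D := Module.Finite.of_surjective π (fun d => ⟨d, hπ d⟩)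
  haveI : Subsingleton ↥D := by
    apply nakayama_subsingleton (Λ := Λ)
    intro d _
    have hdk : (d : PP) ∈ LinearMap.ker q := by
      rw [LinearMap.mem_ker, ← hgq]
      have : g (d : PP) = 0 := d.2
      rw [this, map_zero]
    have hdr : (d : PP) ∈ ModuleRad Λ PP := hqk hdk
    have : d = π (d : PP) := (hπ d).symm
    rw [this]
    exact rad_map_le π ⟨(d : PP), hdr, rfl⟩
  have hginj : Function.Injective g := by
    rw [← LinearMap.ker_eq_bot]
    ext z
    simp only [Submodule.mem_bot]
    constructor
    · intro hz
      have : (⟨z, hz⟩ : ↥D) = (⟨0, (LinearMap.ker g).zero_mem⟩ : ↥D) := Subsingleton.elim _ _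
      exact congrArg Subtype.val this
    · rintro rfl; exact (LinearMap.ker g).zero_mem
  let e : PP ≃ₗ[Λ] QQ := LinearEquiv.ofBijective g ⟨hginj, hgs⟩
  have hmap : (LinearMap.ker q).map (e : PP →ₗ[Λ] QQ) = LinearMap.ker p := by
    ext z
    simp only [Submodule.mem_map, LinearMap.mem_ker]
    constructor
    · rintro ⟨x, hx, rfl⟩
      have : (e : PP →ₗ[Λ] QQ) x = g x := rfl
      rw [this, hgq, hx]
    · intro hz
      obtain ⟨x, rfl⟩ := hgs z
      refine ⟨x, ?_, rfl⟩
      rw [← hgq x]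
      exact hz
  exact ⟨(e.submoduleMap (LinearMap.ker q)).trans (LinearEquiv.ofEq _ _ hmap)⟩

end LEN

/-- given a path `Qₙ → ⋯ → Q₀` (here `f i : Q (i+1) → Q i` is the
paper's `f_{i+1}`) of nonzero nonisomorphisms between finitely generated
indecomposable projective modules of length 2 each having a nonprojective
submodule: the path is exact in the middle, the cokernel of `f 0` and the
kernel of `f (n-1)` are simple nonprojective, and `P_{n+2} ≠ 0` in any minimal
projective resolution of the cokernel `T = Q₀ / im f₁`. -/
theorem path_in_Q_exact_and_pd (Λ : Type) [Ring Λ] [IsArtinianRing Λ]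
    (n : ℕ) (hn : 1 ≤ n)
    (Q : ℕ → Type) [∀ i, AddCommGroup (Q i)] [∀ i, Module Λ (Q i)]
    (hQ : ∀ i ≤ n, Module.Finite Λ (Q i) ∧ Module.Projective Λ (Q i) ∧
      IndecomposableModule Λ (Q i) ∧ ModuleLength Λ (Q i) = 2 ∧
      ∃ N : Submodule Λ (Q i), ¬ Module.Projective Λ ↥N)
    (f : ∀ i : ℕ, Q (i + 1) →ₗ[Λ] Q i)
    (hf : ∀ i < n, f i ≠ 0 ∧ ¬ Function.Bijective (f i)) :
    (∀ i : ℕ, i + 1 < n →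
      LinearMap.range (f (i + 1)) = LinearMap.ker (f i)) ∧
    (IsSimpleModule Λ (Q 0 ⧸ LinearMap.range (f 0)) ∧
      ¬ Module.Projective Λ (Q 0 ⧸ LinearMap.range (f 0))) ∧
    (IsSimpleModule Λ ↥(LinearMap.ker (f (n - 1))) ∧
      ¬ Module.Projective Λ ↥(LinearMap.ker (f (n - 1)))) ∧
    (∀ res : MinProjRes Λ (Q 0 ⧸ LinearMap.range (f 0)),
      ∃ x : res.P (n + 2), x ≠ 0) := by
  classical
  have hmid : ∀ i, i ≤ n → ∃ S : Submodule Λ (Q i), ⊥ < S ∧ S < ⊤ ∧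
      (∀ N : Submodule Λ (Q i), N = ⊥ ∨ N = S ∨ N = ⊤) ∧ S ≤ ModuleRad Λ (Q i) := by
    intro i hi
    obtain ⟨hfin, hproj, hind, hlen, -⟩ := hQ i hi
    haveI := hfin
    exact mid_spec _ hind hlen
  choose! S hS1 hS2 hS3 hS4 using hmid
  -- basic facts about the maps
  have hmap : ∀ i, i < n →
      LinearMap.ker (f i) = S (i + 1) ∧ LinearMap.range (f i) = S i := by
    intro i hi
    obtain ⟨hfz, hfb⟩ := hf i hi
    have hi1 : i + 1 ≤ n := by omega
    have hi0 : i ≤ n := by omega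
    have hker : LinearMap.ker (f i) = S (i + 1) := by
      rcases hS3 (i + 1) hi1 (LinearMap.ker (f i)) with h | h | h
      · exfalso
        have hinj : Function.Injective (f i) := LinearMap.ker_eq_bot.mp h
        have hrt : LinearMap.range (f i) ≠ ⊤ := fun ht =>
          hfb ⟨hinj, LinearMap.range_eq_top.mp ht⟩
        refine four_chain_absurd (hQ i hi0).2.2.2.1
          (A := Submodule.map (f i) (S (i + 1))) (B := LinearMap.range (f i)) ?_ ?_ ?_
        · have := Submodule.map_strictMono_of_injective hinj (hS1 (i + 1) hi1)
          rwa [Submodule.map_bot] at this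
        · have := Submodule.map_strictMono_of_injective hinj (hS2 (i + 1) hi1)
          rwa [Submodule.map_top] at this
        · exact lt_top_iff_ne_top.mpr hrt
      · exact h
      · exact absurd (LinearMap.ker_eq_top.mp h) hfz
    have hrange : LinearMap.range (f i) = S i := by
      rcases hS3 i hi0 (LinearMap.range (f i)) with h | h | h
      · exact absurd (LinearMap.range_eq_bot.mp h) hfz
      · exact h
      · exfalso
        have hsurj : Function.Surjective (f i) := LinearMap.range_eq_top.mp h
        have hcm : StrictMono (Submodule.comap (f i)) := fun A B hAB =>
          lt_of_le_of_ne (Submodule.comap_mono hAB.le)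
            (fun hh => hAB.ne (Submodule.comap_injective_of_surjective hsurj hh))
        refine four_chain_absurd (hQ (i + 1) hi1).2.2.2.1
          (A := LinearMap.ker (f i)) (B := Submodule.comap (f i) (S i)) ?_ ?_ ?_
        · rw [hker]; exact hS1 (i + 1) hi1
        · have := hcm (hS1 i hi0)
          rwa [Submodule.comap_bot] at this
        · have := hcm (hS2 i hi0)
          rwa [Submodule.comap_top] at this
    exact ⟨hker, hrange⟩
  have h0n : (0 : ℕ) < n := hn
  have hrange0 : LinearMap.range (f 0) = S 0 := (hmap 0 h0n).2
  -- simplicity of T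
  have hTsimple : IsSimpleModule Λ (Q 0 ⧸ LinearMap.range (f 0)) := by
    rw [hrange0]
    rw [isSimpleModule_iff_isCoatom]
    constructor
    · exact (hS2 0 (by omega)).ne
    · intro b hb
      rcases hS3 0 (by omega) b with rfl | rfl | rfl
      · exact absurd hb (by simp)
      · exact absurd hb (lt_irrefl _)
      · rfl
  -- nonprojectivity of T
  have hTnp : ¬ Module.Projective Λ (Q 0 ⧸ LinearMap.range (f 0)) := by
    intro hT
    obtain ⟨hfin0, hproj0, hind0, hlen0, -⟩ := hQ 0 (by omega)
    haveI := hT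
    obtain ⟨sec, hsec⟩ := Module.projective_lifting_property
      (Submodule.mkQ (LinearMap.range (f 0))) LinearMap.id
      (Submodule.mkQ_surjective _)
    have hsec' : ∀ t, Submodule.mkQ (LinearMap.range (f 0)) (sec t) = t := fun t => by
      rw [← LinearMap.comp_apply, hsec, LinearMap.id_apply]
    refine hind0.2 ⟨LinearMap.range sec, LinearMap.range (f 0), ?_, ?_, ?_⟩
    · -- range sec ≠ ⊥
      intro hbot
      obtain ⟨x, hx⟩ := SetLike.exists_of_lt (hrange0 ▸ hS2 0 (by omega) :
        LinearMap.range (f 0) < ⊤)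
      have hx0 : Submodule.mkQ (LinearMap.range (f 0)) x ≠ 0 := by
        rw [Submodule.mkQ_apply, ne_eq, Submodule.Quotient.mk_eq_zero]
        exact hx.2
      have : sec (Submodule.mkQ (LinearMap.range (f 0)) x) = 0 := by
        have hmem : sec (Submodule.mkQ (LinearMap.range (f 0)) x) ∈ LinearMap.range sec :=
          LinearMap.mem_range_self _ _
        rw [hbot, Submodule.mem_bot] at hmem
        exact hmem
      exact hx0 (by rw [← hsec' (Submodule.mkQ (LinearMap.range (f 0)) x), this, map_zero])
    · exact (hrange0 ▸ hS1 0 (by omega) : (⊥ : Submodule Λ (Q 0)) < LinearMap.range (f 0)).ne'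
    · constructor
      · rw [disjoint_iff]
        ext z
        simp only [Submodule.mem_inf, Submodule.mem_bot, LinearMap.mem_range]
        constructor
        · rintro ⟨⟨y, rfl⟩, hz⟩
          have : Submodule.mkQ (LinearMap.range (f 0)) (sec y) = 0 :=
            (Submodule.Quotient.mk_eq_zero _).mpr hz
          rw [hsec' y] at this
          rw [this, map_zero]
        · rintro rfl
          exact ⟨⟨0, map_zero sec⟩, ⟨0, map_zero (f 0)⟩⟩
      · rw [codisjoint_iff, eq_top_iff]
        intro x _
        have h1 : x - sec (Submodule.mkQ (LinearMap.range (f 0)) x) ∈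
            LinearMap.range (f 0) := by
          rw [← Submodule.Quotient.mk_eq_zero (LinearMap.range (f 0)),
            ← Submodule.mkQ_apply, map_sub, hsec', sub_self]
        have : x = sec (Submodule.mkQ (LinearMap.range (f 0)) x) +
            (x - sec (Submodule.mkQ (LinearMap.range (f 0)) x)) := by abel
        rw [this]
        exact Submodule.add_mem_sup (LinearMap.mem_range_self _ _) h1
  -- simplicity and nonprojectivity of ker f (n-1)
  have hn1 : n - 1 < n := by omega
  have hn1e : n - 1 + 1 ≤ n := by omega
  have hkern : LinearMap.ker (f (n - 1)) = S (n - 1 + 1) := (hmap (n - 1) hn1).1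
  have hSatom : ∀ i (hi : i ≤ n), IsSimpleModule Λ ↥(S i) := by
    intro i hi
    rw [isSimpleModule_iff_isAtom]
    constructor
    · exact (hS1 i hi).ne'
    · intro b hb
      rcases hS3 i hi b with rfl | rfl | rfl
      · rfl
      · exact absurd hb (lt_irrefl _)
      · exact absurd ((hS2 i hi).trans_le hb.le) (lt_irrefl _)
  have hSnp : ∀ i (hi : i ≤ n), ¬ Module.Projective Λ ↥(S i) := by
    intro i hi hproj
    obtain ⟨hfin, hprojQ, hind, hlen, N, hN⟩ := hQ i hi
    haveI := hprojQ
    rcases hS3 i hi N with rfl | rfl | rfl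
    · exact hN (projective_of_subsingleton _)
    · exact hN hproj
    · exact hN (Module.Projective.of_equiv (Submodule.topEquiv (R := Λ) (M := Q i)).symm)
  refine ⟨?_, ⟨hTsimple, hTnp⟩, ⟨?_, ?_⟩, ?_⟩
  · intro i hi
    rw [(hmap (i + 1) hi).2, (hmap i (by omega)).1]
  · rw [hkern]; exact hSatom _ hn1e
  · rw [hkern]; exact hSnp _ hn1e
  -- the resolution statement
  intro res
  letI : ∀ m, AddCommGroup (res.P m) := res.acg
  letI : ∀ m, Module Λ (res.P m) := res.mod
  -- syzygies
  obtain ⟨Z, hZ0, hZs⟩ : ∃ Z : ∀ m, Submodule Λ (res.P m),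
      (Z 0 = LinearMap.ker res.d0) ∧ ∀ k, Z (k + 1) = LinearMap.ker (res.d k) :=
    ⟨fun m => Nat.casesOn m (LinearMap.ker res.d0) (fun k => LinearMap.ker (res.d k)),
      rfl, fun k => rfl⟩
  have hZrange : ∀ m, LinearMap.range (res.d m) = Z m := by
    intro m
    cases m with
    | zero => rw [hZ0]; exact res.exact0
    | succ k => rw [hZs k]; exact res.exact k
  have main : ∀ m, m ≤ n → Nonempty (↥(Z m) ≃ₗ[Λ] ↥(S m)) := by
    intro m
    induction m with
    | zero =>
      intro _
      obtain ⟨hfin0, hproj0, -, -, -⟩ := hQ 0 (by omega)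
      haveI := hfin0; haveI := hproj0
      haveI := res.fg 0; haveI := res.proj 0
      obtain ⟨eqv⟩ := cover_compare (Λ := Λ) (M := Q 0 ⧸ LinearMap.range (f 0))
        (Submodule.mkQ (LinearMap.range (f 0))) (Submodule.mkQ_surjective _)
        (by rw [Submodule.ker_mkQ, hrange0]; exact hS4 0 (by omega))
        res.d0 res.surj res.min0
      refine ⟨(LinearEquiv.ofEq (Z 0) (LinearMap.ker res.d0) hZ0).trans
        (eqv.trans (LinearEquiv.ofEq _ _ ?_))⟩
      rw [Submodule.ker_mkQ, hrange0]
    | succ k ih =>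
      intro hk1
      obtain ⟨ek⟩ := ih (by omega)
      have hk : k < n := by omega
      obtain ⟨hfink, hprojk, -, -, -⟩ := hQ (k + 1) hk1
      haveI := hfink; haveI := hprojk
      haveI := res.fg (k + 1); haveI := res.proj (k + 1)
      have hrangek : LinearMap.range (f k) = S k := (hmap k hk).2
      let p : Q (k + 1) →ₗ[Λ] ↥(S k) :=
        LinearMap.codRestrict (S k) (f k) (fun x => hrangek ▸ LinearMap.mem_range_self _ x)
      have hps : Function.Surjective p := by
        intro y
        have : (y : Q k) ∈ LinearMap.range (f k) := hrangek.symm ▸ y.2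
        obtain ⟨x, hx⟩ := this
        exact ⟨x, Subtype.ext hx⟩
      have hpk : LinearMap.ker p = S (k + 1) := by
        rw [LinearMap.ker_codRestrict]
        exact (hmap k hk).1
      let q0 : res.P (k + 1) →ₗ[Λ] ↥(Z k) :=
        LinearMap.codRestrict (Z k) (res.d k)
          (fun x => (hZrange k) ▸ LinearMap.mem_range_self _ x)
      have hq0s : Function.Surjective q0 := by
        intro y
        have : (y : res.P k) ∈ LinearMap.range (res.d k) := (hZrange k).symm ▸ y.2
        obtain ⟨x, hx⟩ := this
        exact ⟨x, Subtype.ext hx⟩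
      let q : res.P (k + 1) →ₗ[Λ] ↥(S k) := ek.toLinearMap ∘ₗ q0
      have hqs : Function.Surjective q := by
        intro y
        obtain ⟨z, hz⟩ := hq0s (ek.symm y)
        exact ⟨z, by simp [q, hz]⟩
      have hq0coe : ∀ x : res.P (k + 1), ((q0 x : ↥(Z k)) : res.P k) = res.d k x :=
        fun _ => rfl
      have hqapp : ∀ x : res.P (k + 1), q x = ek (q0 x) := fun _ => rfl
      have hqk0 : LinearMap.ker q = LinearMap.ker (res.d k) := by
        ext x
        simp only [LinearMap.mem_ker]
        constructor
        · intro h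
          rw [hqapp] at h
          have h2 : q0 x = 0 := ek.injective (by rw [h, map_zero])
          have h3 := congrArg (fun z : ↥(Z k) => (z : res.P k)) h2
          simpa [hq0coe x] using h3
        · intro h
          rw [hqapp]
          have h2 : q0 x = 0 := Subtype.ext (by rw [hq0coe x, h]; rfl)
          rw [h2, map_zero]
      obtain ⟨eqv⟩ := cover_compare (Λ := Λ) (M := ↥(S k))
        p hps (by rw [hpk]; exact hS4 (k + 1) hk1)
        q hqs (by rw [hqk0]; exact res.min k)
      refine ⟨((LinearEquiv.ofEq (Z (k + 1)) (LinearMap.ker q) ((hZs k).trans hqk0.symm)).trans eqv).trans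
        (LinearEquiv.ofEq _ _ hpk)⟩
  obtain ⟨en⟩ := main n le_rfl
  have hker_ne : LinearMap.ker (res.d n) ≠ ⊥ := by
    intro hbot
    let q0 : res.P (n + 1) →ₗ[Λ] ↥(Z n) :=
      LinearMap.codRestrict (Z n) (res.d n)
        (fun x => (hZrange n) ▸ LinearMap.mem_range_self _ x)
    have hq0s : Function.Surjective q0 := by
      intro y
      have : (y : res.P n) ∈ LinearMap.range (res.d n) := (hZrange n).symm ▸ y.2
      obtain ⟨x, hx⟩ := this
      exact ⟨x, Subtype.ext hx⟩
    have hq0i : Function.Injective q0 := by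
      rw [← LinearMap.ker_eq_bot]
      rw [LinearMap.ker_codRestrict]
      exact hbot
    haveI := res.proj (n + 1)
    exact hSnp n le_rfl
      (Module.Projective.of_equiv ((LinearEquiv.ofBijective q0 ⟨hq0i, hq0s⟩).trans en))
  obtain ⟨y, hy, hy0⟩ := (Submodule.ne_bot_iff _).mp hker_ne
  have hy' : y ∈ LinearMap.range (res.d (n + 1)) := (res.exact n).symm ▸ hy
  obtain ⟨x, hx⟩ := hy'
  exact ⟨x, fun h0 => hy0 (by rw [← hx, h0, map_zero])⟩
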